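/- arXiv:1207.1125 — 5 statements merged into one kernel-verified Lean document; each statement's English description precedes it below -/
import Mathlib

section
/- Assume sup_t‖A(t)‖ ≤ M, let T₀ = β^{−1/2}, and let A₁(t) = U₀(t)⁻¹[A(t) − Ā^g(t)]U₀(t) where U₀ is the unitary propagator with generator βĀ^g. Then there is a constant C (depending only on M) such that for all t ≥ 0, ‖∫₀^t A₁(s) ds‖ ≤ C(β^{−1/2} + β^{1/2} t). -/
set_option maxHeartbeats 1000000
set_option synthInstance.maxHeartbeats 1000000

open scoped Real
open MeasureTheory intervalIntegral Filter

noncomputable section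

abbrev Hs (N : ℕ) : Type := EuclideanSpace ℂ (Fin N)
abbrev Lop (N : ℕ) : Type := Hs N →L[ℂ] Hs N

/-- The averaging window T₀ = β^{-1/2}. -/
def T0 (β : ℝ) : ℝ := β ^ (-(1:ℝ)/2)

/-- The average of A over the interval [n·T₀, (n+1)·T₀]. -/
def avg {N : ℕ} (A : ℝ → Lop N) (T₀ : ℝ) (n : ℕ) : Lop N :=
  T₀⁻¹ • ∫ s in ((n : ℝ) * T₀)..(((n : ℝ) + 1) * T₀), A s

/-- The piecewise-constant global average: Ā^g(t) = Ā⁽ⁿ⁾ for n·T₀ ≤ t < (n+1)·T₀. -/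
def pavg {N : ℕ} (A : ℝ → Lop N) (T₀ : ℝ) (t : ℝ) : Lop N :=
  avg A T₀ ⌊t / T₀⌋₊

lemma norm_unitary_le' {N : ℕ} {U : Lop N} (h : U ∈ unitary (Lop N)) : ‖U‖ ≤ 1 := by
  have h1 : star U * U = 1 := (Unitary.mem_iff.mp h).1
  have h2 : ‖star U * U‖ = ‖U‖ * ‖U‖ := CStarRing.norm_star_mul_self (x := U)
  rw [h1] at h2
  have h3 : ‖(1 : Lop N)‖ ≤ 1 := by
    rw [ContinuousLinearMap.one_def]; exact ContinuousLinearMap.norm_id_le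
  nlinarith [norm_nonneg U]

lemma star_cont {N : ℕ} : Continuous (fun X : Lop N => star X) := by
  have h : (fun X : Lop N => star X) = fun X => ContinuousLinearMap.adjoint X :=
    funext fun X => ContinuousLinearMap.star_eq_adjoint X
  rw [h]
  exact (ContinuousLinearMap.adjoint (E := Hs N) (F := Hs N) (𝕜 := ℂ)).continuous

lemma norm_star' {N : ℕ} (x : Lop N) : ‖star x‖ = ‖x‖ := by
  rw [ContinuousLinearMap.star_eq_adjoint]
  exact (ContinuousLinearMap.adjoint (𝕜 := ℂ)).norm_map x

lemma lip_ext {E : Type*} [NormedAddCommGroup E] {f : ℝ → E} {a b L : ℝ} (hab : a < b)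
    (hc : Continuous f)
    (h : ∀ x ∈ Set.Ioo a b, ∀ y ∈ Set.Ioo a b, ‖f y - f x‖ ≤ L * |y - x|) :
    ∀ x ∈ Set.Icc a b, ∀ y ∈ Set.Icc a b, ‖f y - f x‖ ≤ L * |y - x| := by
  have hcl : IsClosed {p : ℝ × ℝ | ‖f p.2 - f p.1‖ ≤ L * |p.2 - p.1|} := by
    apply isClosed_le
    · exact ((hc.comp continuous_snd).sub (hc.comp continuous_fst)).norm
    · exact continuous_const.mul (continuous_snd.sub continuous_fst).abs
  have hsub : Set.Icc a b ×ˢ Set.Icc a b ⊆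
      {p : ℝ × ℝ | ‖f p.2 - f p.1‖ ≤ L * |p.2 - p.1|} := by
    rw [← closure_Ioo hab.ne, ← closure_prod_eq]
    exact hcl.closure_subset_iff.mpr fun p hp => h p.1 hp.1 p.2 hp.2
  intro x hx y hy
  exact hsub (Set.mk_mem_prod hx hy)

/-- With T₀ = β^{-1/2} and A₁ = U₀⁻¹[A − Ā^g]U₀,
‖∫₀^t A₁(s) ds‖ ≤ C(β^{-1/2} + β^{1/2}t) with C depending only on M. -/
theorem stmt7 (M : ℝ) :
    ∃ C > 0, ∀ (N : ℕ) (β : ℝ), 0 < β → β < 1 →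
    ∀ (A U₀ : ℝ → Lop N),
    Continuous A → (∀ t ≥ (0:ℝ), IsSelfAdjoint (A t)) → (∀ t, ‖A t‖ ≤ M) →
    U₀ 0 = 1 → Continuous U₀ → (∀ t, U₀ t ∈ unitary (Lop N)) →
    (∀ n : ℕ, ∀ t ∈ Set.Ioo ((n : ℝ) * T0 β) (((n : ℝ) + 1) * T0 β),
      HasDerivAt U₀ ((-(Complex.I) * (β : ℂ)) • (pavg A (T0 β) t * U₀ t)) t) →
    ∀ t ≥ (0:ℝ),
      ‖∫ s in (0:ℝ)..t, (star (U₀ s) * (A s - pavg A (T0 β) s) * U₀ s)‖ ≤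
        C * (β ^ (-(1:ℝ)/2) + β ^ ((1:ℝ)/2) * t) := by
  set M' := max M 0 with hM'def
  have hM'0 : 0 ≤ M' := le_max_right _ _
  refine ⟨4*M'^2 + 2*M' + 1, by positivity, ?_⟩
  intro N β hβ hβ1 A U₀ hA hsa hAM hU00 hUc hUu hderiv t ht
  have hAM' : ∀ s, ‖A s‖ ≤ M' := fun s => le_trans (hAM s) (le_max_left _ _)
  set T := T0 β with hTdef
  have hT0 : 0 < T := Real.rpow_pos_of_pos hβ _
  have hTeq : β ^ (-(1:ℝ)/2) = T := by rw [hTdef, T0]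
  have hTinv : T⁻¹ = β ^ ((1:ℝ)/2) := by
    rw [hTdef, T0, show (-(1:ℝ)/2) = -((1:ℝ)/2) by norm_num, Real.rpow_neg hβ.le, inv_inv]
  have hβTT : β * (T * T) = 1 := by
    rw [hTdef, T0, ← Real.rpow_add hβ, show (-(1:ℝ)/2 + -(1:ℝ)/2) = (-1 : ℝ) by norm_num,
      Real.rpow_neg_one, mul_inv_cancel₀ hβ.ne']
  -- norms of unitaries
  have hU1 : ∀ s, ‖U₀ s‖ ≤ 1 := fun s => norm_unitary_le' (hUu s)
  have hUstar1 : ∀ s, ‖star (U₀ s)‖ ≤ 1 := fun s =>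
    norm_unitary_le' (Unitary.star_mem (hUu s))
  -- bound on averages
  have havg : ∀ k : ℕ, ‖avg A T k‖ ≤ M' := by
    intro k
    have h1 : ‖∫ s in ((k:ℝ)*T)..(((k:ℝ)+1)*T), A s‖ ≤ M' * |((k:ℝ)+1)*T - (k:ℝ)*T| :=
      intervalIntegral.norm_integral_le_of_norm_le_const fun x _ => hAM' x
    have h2 : ((k:ℝ)+1)*T - (k:ℝ)*T = T := by ring
    rw [h2, abs_of_pos hT0] at h1
    have h3 : ‖avg A T k‖ ≤ ‖T⁻¹‖ * ‖∫ s in ((k:ℝ)*T)..(((k:ℝ)+1)*T), A s‖ := by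
      unfold avg
      exact ContinuousLinearMap.opNorm_smul_le _ _
    have h4 : ‖T⁻¹‖ = T⁻¹ := by
      rw [Real.norm_eq_abs, abs_of_pos (inv_pos.mpr hT0)]
    rw [h4] at h3
    refine le_trans h3 ?_
    calc T⁻¹ * ‖∫ s in ((k:ℝ)*T)..(((k:ℝ)+1)*T), A s‖
        ≤ T⁻¹ * (M' * T) := mul_le_mul_of_nonneg_left h1 (inv_nonneg.mpr hT0.le)
      _ = M' := by rw [mul_comm M' T, ← mul_assoc, inv_mul_cancel₀ hT0.ne', one_mul]
  have hpavgM : ∀ s, ‖pavg A T s‖ ≤ M' := fun s => havg _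
  -- pavg is constant on each interval
  have hpavg_eq : ∀ (k : ℕ) (s : ℝ), (k:ℝ)*T ≤ s → s < ((k:ℝ)+1)*T → pavg A T s = avg A T k := by
    intro k s h1 h2
    have hs0 : 0 ≤ s := le_trans (by positivity) h1
    unfold pavg
    congr 1
    rw [Nat.floor_eq_iff (div_nonneg hs0 hT0.le)]
    constructor
    · rw [le_div_iff₀ hT0]; exact h1
    · rw [div_lt_iff₀ hT0]; push_cast; linarith
  -- Lipschitz bound on U₀ on each interval
  have hLip : ∀ k : ℕ, ∀ x ∈ Set.Icc ((k:ℝ)*T) (((k:ℝ)+1)*T),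
      ‖U₀ x - U₀ ((k:ℝ)*T)‖ ≤ β * M' * (x - (k:ℝ)*T) := by
    intro k
    have hab : (k:ℝ)*T < ((k:ℝ)+1)*T := by nlinarith [Nat.cast_nonneg (α := ℝ) k]
    have hioo : ∀ x ∈ Set.Ioo ((k:ℝ)*T) (((k:ℝ)+1)*T), ∀ y ∈ Set.Ioo ((k:ℝ)*T) (((k:ℝ)+1)*T),
        ‖U₀ y - U₀ x‖ ≤ (β * M') * |y - x| := by
      intro x hx y hy
      have hbd : ∀ z ∈ Set.Ioo ((k:ℝ)*T) (((k:ℝ)+1)*T),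
          ‖(-(Complex.I) * (β : ℂ)) • (pavg A T z * U₀ z)‖ ≤ β * M' := by
        intro z _
        refine le_trans (ContinuousLinearMap.opNorm_smul_le _ _) ?_
        have hc : ‖(-(Complex.I) * (β : ℂ))‖ = β := by
          simp [norm_mul, abs_of_pos hβ]
        rw [hc]
        have h5 : ‖pavg A T z * U₀ z‖ ≤ M' * 1 :=
          le_trans (norm_mul_le _ _)
            (mul_le_mul (hpavgM z) (hU1 z) (norm_nonneg _) hM'0)
        nlinarith
      have := Convex.norm_image_sub_le_of_norm_hasDerivWithin_le
        (f := U₀) (f' := fun z => (-(Complex.I) * (β : ℂ)) • (pavg A T z * U₀ z))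
        (fun z hz => (hderiv k z hz).hasDerivWithinAt) hbd (convex_Ioo _ _) hx hy
      simpa [Real.norm_eq_abs] using this
    intro x hx
    have := lip_ext hab hUc hioo ((k:ℝ)*T) (Set.left_mem_Icc.mpr hab.le) x hx
    rw [abs_of_nonneg (by linarith [hx.1])] at this
    linarith [this]
  -- the integrand and its continuous versions
  set F : ℝ → Lop N := fun s => star (U₀ s) * (A s - pavg A T s) * U₀ s with hF
  set G : ℕ → ℝ → Lop N := fun k s => star (U₀ s) * (A s - avg A T k) * U₀ s with hG
  have hGc : ∀ k, Continuous (G k) := fun k =>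
    ((star_cont.comp hUc).mul (hA.sub continuous_const)).mul hUc
  have hab' : ∀ k : ℕ, (k:ℝ)*T ≤ ((k:ℝ)+1)*T := by
    intro k; nlinarith [Nat.cast_nonneg (α := ℝ) k]
  -- a.e. equality of F and G k on the k-th interval
  have hFG : ∀ k : ℕ, ∀ᵐ x : ℝ, x ∈ Set.uIoc ((k:ℝ)*T) (((k:ℝ)+1)*T) → F x = G k x := by
    intro k
    have hne : ∀ᵐ x : ℝ, x ≠ ((k:ℝ)+1)*T := by
      rw [MeasureTheory.ae_iff]
      refine MeasureTheory.measure_mono_null ?_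
        (Real.volume_singleton (a := ((k:ℝ)+1)*T))
      intro x hx; simpa using hx
    filter_upwards [hne] with x hxne hxmem
    rw [Set.uIoc_of_le (hab' k)] at hxmem
    have hlt : x < ((k:ℝ)+1)*T := lt_of_le_of_ne hxmem.2 hxne
    simp only [hF, hG, hpavg_eq k x hxmem.1.le hlt]
  have hFint : ∀ k : ℕ, IntervalIntegrable F volume ((k:ℝ)*T) (((k:ℝ)+1)*T) := by
    intro k
    refine ((hGc k).intervalIntegrable _ _).congr_ae ?_
    have h : F =ᵐ[volume.restrict (Set.uIoc ((k:ℝ)*T) (((k:ℝ)+1)*T))] G k :=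
      (MeasureTheory.ae_restrict_iff' measurableSet_uIoc).mpr (hFG k)
    exact h.symm
  -- the integral of (A - avg k) over the k-th interval vanishes
  have hDzero : ∀ k : ℕ, (∫ s in ((k:ℝ)*T)..(((k:ℝ)+1)*T), (A s - avg A T k)) = 0 := by
    intro k
    rw [intervalIntegral.integral_sub (hA.intervalIntegrable _ _) intervalIntegrable_const,
      intervalIntegral.integral_const,
      show ((k:ℝ)+1)*T - (k:ℝ)*T = T by ring]
    unfold avg
    rw [smul_smul, mul_inv_cancel₀ hT0.ne', one_smul, sub_self]
  -- bound for each full interval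
  have hfull : ∀ k : ℕ, ‖∫ s in ((k:ℝ)*T)..(((k:ℝ)+1)*T), F s‖ ≤ 4*M'^2 := by
    intro k
    set a := (k:ℝ)*T with hadef
    set b := ((k:ℝ)+1)*T with hbdef
    set V := U₀ a with hV
    set H : ℝ → Lop N := fun s => star V * (A s - avg A T k) * V with hH
    have hHc : Continuous H :=
      (continuous_const.mul (hA.sub continuous_const)).mul continuous_const
    have hHzero : (∫ s in a..b, H s) = 0 := by
      have hDi : IntervalIntegrable (fun s => A s - avg A T k) volume a b :=
        (hA.sub continuous_const).intervalIntegrable _ _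
      have hcomm := (ContinuousLinearMap.mulLeftRight ℂ (Lop N) (star V) V
        ).intervalIntegral_comp_comm hDi
      simp only [ContinuousLinearMap.mulLeftRight_apply] at hcomm
      calc (∫ s in a..b, H s)
          = star V * (∫ s in a..b, (A s - avg A T k)) * V := by
            simp only [hH]; exact hcomm
        _ = 0 := by rw [hDzero k, mul_zero, zero_mul]
    have hGH : (∫ s in a..b, G k s) = ∫ s in a..b, (G k s - H s) := by
      rw [intervalIntegral.integral_sub ((hGc k).intervalIntegrable _ _)
        (hHc.intervalIntegrable _ _), hHzero, sub_zero]
    have hba2 : b = a + T := by rw [hadef, hbdef]; ring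
    have hpt : ∀ x ∈ Set.uIoc a b, ‖G k x - H x‖ ≤ 4*M'^2*β*T := by
      intro x hx
      rw [Set.uIoc_of_le (show a ≤ b from hab' k)] at hx
      have hxIcc : x ∈ Set.Icc a b := ⟨hx.1.le, hx.2⟩
      have hxa : x - a ≤ T := by
        have h6 := hx.2; rw [hba2] at h6; linarith
      have hlip := hLip k x hxIcc
      have hUV : ‖U₀ x - V‖ ≤ β * M' * T := by
        refine le_trans hlip ?_
        have h7 : 0 ≤ β * M' := by positivity
        nlinarith [hx.1.le, hxIcc.1]
      have hD : ‖A x - avg A T k‖ ≤ 2 * M' :=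
        le_trans (norm_sub_le _ _) (by linarith [hAM' x, havg k])
      have hiden : G k x - H x =
          (star (U₀ x) - star V) * (A x - avg A T k) * U₀ x
            + star V * (A x - avg A T k) * (U₀ x - V) := by
        simp only [hG, hH, sub_mul, mul_sub]
        abel
      rw [hiden]
      have hsUV : ‖star (U₀ x) - star V‖ ≤ β * M' * T := by
        have h9 : star (U₀ x) - star V = star (U₀ x - V) := (star_sub (U₀ x) V).symm
        exact (congrArg (fun z : Lop N => ‖z‖) h9).trans_le ((norm_star' _).trans_le hUV)
      have ht1 : ‖(star (U₀ x) - star V) * (A x - avg A T k) * U₀ x‖ ≤ (β*M'*T) * (2*M') * 1 := by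
        refine le_trans (norm_mul_le _ _) ?_
        refine mul_le_mul (le_trans (norm_mul_le _ _) ?_) (hU1 x) (norm_nonneg _)
          (by positivity)
        exact mul_le_mul hsUV hD (norm_nonneg _) (by positivity)
      have ht2 : ‖star V * (A x - avg A T k) * (U₀ x - V)‖ ≤ 1 * (2*M') * (β*M'*T) := by
        refine le_trans (norm_mul_le _ _) ?_
        refine mul_le_mul (le_trans (norm_mul_le _ _) ?_) hUV (norm_nonneg _)
          (by positivity)
        exact mul_le_mul (hUstar1 a) hD (norm_nonneg _) zero_le_one
      calc ‖(star (U₀ x) - star V) * (A x - avg A T k) * U₀ x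
            + star V * (A x - avg A T k) * (U₀ x - V)‖
          ≤ (β*M'*T) * (2*M') * 1 + 1 * (2*M') * (β*M'*T) :=
            le_trans (norm_add_le _ _) (add_le_add ht1 ht2)
        _ = 4*M'^2*β*T := by ring
    have hbd : ‖∫ s in a..b, (G k s - H s)‖ ≤ (4*M'^2*β*T) * |b - a| :=
      intervalIntegral.norm_integral_le_of_norm_le_const hpt
    have hba : |b - a| = T := by rw [hba2, add_sub_cancel_left, abs_of_pos hT0]
    rw [hba] at hbd
    have heqFG : ‖∫ s in a..b, F s‖ = ‖∫ s in a..b, G k s‖ := by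
      rw [intervalIntegral.integral_congr_ae (hFG k)]
    rw [heqFG, hGH]
    calc ‖∫ s in a..b, (G k s - H s)‖ ≤ 4*M'^2*β*T*T := hbd
      _ = 4*M'^2 * (β*(T*T)) := by ring
      _ = 4*M'^2 := by rw [hβTT, mul_one]
  -- split the integral
  set n := ⌊t / T⌋₊ with hn
  have htdiv0 : (0:ℝ) ≤ t / T := div_nonneg ht hT0.le
  have hta : (n:ℝ)*T ≤ t := by
    have h1 : (n:ℝ) ≤ t / T := Nat.floor_le htdiv0
    have h2 := mul_le_mul_of_nonneg_right h1 hT0.le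
    rwa [div_mul_cancel₀ t hT0.ne'] at h2
  have htb : t < ((n:ℝ)+1)*T := by
    have h1 : t / T < (n:ℝ) + 1 := Nat.lt_floor_add_one (t/T)
    have h2 := (div_lt_iff₀ hT0).mp h1
    linarith
  have hEqOn : Set.EqOn F (G n) (Set.uIcc ((n:ℝ)*T) t) := by
    intro x hx
    rw [Set.uIcc_of_le hta] at hx
    simp only [hF, hG, hpavg_eq n x hx.1 (lt_of_le_of_lt hx.2 htb)]
  have hint2 : IntervalIntegrable F volume ((n:ℝ)*T) t :=
    ((hGc n).continuousOn.congr hEqOn).intervalIntegrable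
  have hint1 : IntervalIntegrable F volume 0 ((n:ℝ)*T) := by
    have h := IntervalIntegrable.trans_iterate (a := fun k : ℕ => (k:ℝ)*T) (n := n)
      (f := F) (μ := volume) (fun k _ => by push_cast; exact hFint k)
    simpa using h
  have hsum := intervalIntegral.sum_integral_adjacent_intervals (a := fun k : ℕ => (k:ℝ)*T)
    (n := n) (f := F) (μ := volume) (fun k _ => by push_cast; exact hFint k)
  have hsplit : (∫ s in (0:ℝ)..t, F s) =
      (∑ k ∈ Finset.range n, ∫ s in ((k:ℝ)*T)..(((k:ℝ)+1)*T), F s)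
        + ∫ s in ((n:ℝ)*T)..t, F s := by
    rw [← intervalIntegral.integral_add_adjacent_intervals hint1 hint2]
    congr 1
    have hcast : (∑ k ∈ Finset.range n, ∫ s in ((k:ℝ)*T)..(((k:ℝ)+1)*T), F s)
        = ∑ k ∈ Finset.range n, ∫ s in (((k:ℕ):ℝ)*T)..((((k+1:ℕ)):ℝ)*T), F s := by
      refine Finset.sum_congr rfl fun k _ => ?_
      push_cast
      rfl
    rw [hcast, hsum]
    norm_num
  -- bound the partial interval
  have hpartial : ‖∫ s in ((n:ℝ)*T)..t, F s‖ ≤ 2*M'*T := by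
    rw [intervalIntegral.integral_congr hEqOn]
    have hb : ∀ x ∈ Set.uIoc ((n:ℝ)*T) t, ‖G n x‖ ≤ 2*M' := by
      intro x _
      simp only [hG]
      have hD : ‖A x - avg A T n‖ ≤ 2 * M' :=
        le_trans (norm_sub_le _ _) (by linarith [hAM' x, havg n])
      calc ‖star (U₀ x) * (A x - avg A T n) * U₀ x‖
          ≤ ‖star (U₀ x) * (A x - avg A T n)‖ * ‖U₀ x‖ := norm_mul_le _ _
        _ ≤ (1 * (2*M')) * 1 := by
            refine mul_le_mul (le_trans (norm_mul_le _ _) ?_) (hU1 x) (norm_nonneg _)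
              (by positivity)
            exact mul_le_mul (hUstar1 x) hD (norm_nonneg _) zero_le_one
        _ = 2*M' := by ring
    have h8 := intervalIntegral.norm_integral_le_of_norm_le_const hb
    have habs : |t - (n:ℝ)*T| ≤ T := by
      rw [abs_of_nonneg (by linarith)]
      linarith
    calc ‖∫ s in ((n:ℝ)*T)..t, G n s‖ ≤ 2*M' * |t - (n:ℝ)*T| := h8
      _ ≤ 2*M' * T := by nlinarith
  -- assemble
  have hnorm : ‖∫ s in (0:ℝ)..t, F s‖ ≤ (n:ℝ) * (4*M'^2) + 2*M'*T := by
    rw [hsplit]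
    refine le_trans (norm_add_le _ _) ?_
    refine add_le_add ?_ hpartial
    refine le_trans (norm_sum_le _ _) ?_
    calc (∑ k ∈ Finset.range n, ‖∫ s in ((k:ℝ)*T)..(((k:ℝ)+1)*T), F s‖)
        ≤ ∑ _k ∈ Finset.range n, 4*M'^2 := Finset.sum_le_sum fun k _ => hfull k
      _ = (n:ℝ) * (4*M'^2) := by
          rw [Finset.sum_const, Finset.card_range, nsmul_eq_mul]
  -- final arithmetic
  have hnle : (n:ℝ) ≤ t * β ^ ((1:ℝ)/2) := by
    have h1 : (n:ℝ) ≤ t / T := Nat.floor_le htdiv0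
    rwa [div_eq_mul_inv, hTinv] at h1
  have hQ0 : 0 ≤ β ^ ((1:ℝ)/2) := Real.rpow_nonneg hβ.le _
  rw [hTeq]
  have hgoal : (n:ℝ) * (4*M'^2) + 2*M'*T ≤
      (4*M'^2 + 2*M' + 1) * (T + β ^ ((1:ℝ)/2) * t) := by
    have ht0' : 0 ≤ β ^ ((1:ℝ)/2) * t := mul_nonneg hQ0 ht
    nlinarith [mul_le_mul_of_nonneg_left hnle (by positivity : (0:ℝ) ≤ 4*M'^2), hT0.le]
  exact le_trans hnorm hgoal
end
end

section
/- In the setting of the previous theorem, if additionally |T_f − T_i| ≤ 1/β, then sup_{T_i ≤ t ≤ T_f} ‖c₁(t) − c₁(T_i)‖ ≤ C β^{1/2}. -/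
open scoped Real
open MeasureTheory intervalIntegral Filter

noncomputable section

set_option maxHeartbeats 1000000
set_option synthInstance.maxHeartbeats 1000000

/-- if moreover |T_f − T_i| ≤ 1/β then
sup_{T_i ≤ t ≤ T_f}‖c₁(t) − c₁(T_i)‖ ≤ C·β^{1/2}. -/
theorem stmt9 (M C₀ : ℝ) (hM : 0 < M) (hC₀ : 0 < C₀) :
    ∃ C > 0, ∀ (N : ℕ) (β T_i T_f : ℝ), 0 < β → β < 1 → T_i ≤ T_f →
    ∀ (A₁ : ℝ → Lop N) (c₁ : ℝ → Hs N),
    Continuous A₁ → (∀ t, ‖A₁ t‖ ≤ 2 * M) →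
    (∀ t ∈ Set.Icc T_i T_f,
      ‖∫ s in T_i..t, A₁ s‖ ≤ C₀ * (β ^ (-(1:ℝ)/2) + β ^ ((1:ℝ)/2) * (t - T_i))) →
    (∀ t, HasDerivAt c₁ ((-(Complex.I) * (β : ℂ)) • (A₁ t) (c₁ t)) t) →
    (∀ t ∈ Set.Icc T_i T_f, ‖c₁ t‖ = ‖c₁ T_i‖) → ‖c₁ T_i‖ ≤ 1 →
    T_f - T_i ≤ 1 / β →
    ∀ t ∈ Set.Icc T_i T_f, ‖c₁ t - c₁ T_i‖ ≤ C * β ^ ((1:ℝ)/2) := by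
  refine ⟨2 * C₀ * Real.exp (2 * M), by positivity, ?_⟩
  intro N β T_i T_f hβ hβ1 hTT A₁ c₁ hAcont hAnorm hInt hderiv hnormc hc0 hT t ht
  have hβhalf : (0:ℝ) < β ^ ((1:ℝ)/2) := Real.rpow_pos_of_pos hβ _
  have h1 : β * β ^ (-(1:ℝ)/2) = β ^ ((1:ℝ)/2) := by
    rw [← Real.rpow_one_add' (le_of_lt hβ) (by norm_num)]
    norm_num
  -- B t = ∫ A₁
  set B : ℝ → Lop N := fun u => ∫ s in T_i..u, A₁ s with hBdef
  have hB : ∀ x : ℝ, HasDerivAt B (A₁ x) x := by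
    intro x
    exact intervalIntegral.integral_hasDerivAt_right
      (hAcont.intervalIntegrable _ _)
      hAcont.aestronglyMeasurable.stronglyMeasurableAtFilter
      hAcont.continuousAt
  -- evaluation map
  set v : Hs N := c₁ T_i with hv
  have hBv : ∀ x : ℝ, HasDerivAt (fun u => (B u) v) ((A₁ x) v) x := by
    intro x
    exact ((ContinuousLinearMap.apply ℂ (Hs N) v).restrictScalars
      ℝ).hasFDerivAt.comp_hasDerivAt x (hB x)
  set g : ℝ → Hs N := fun u => c₁ u - c₁ T_i + (Complex.I * (β:ℂ)) • (B u) v with hgdef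
  have hg : ∀ x : ℝ, HasDerivAt g
      ((-(Complex.I) * (β:ℂ)) • (A₁ x) (c₁ x - c₁ T_i)) x := by
    intro x
    have := ((hderiv x).sub_const (c₁ T_i)).add ((hBv x).const_smul (Complex.I * (β:ℂ)))
    refine this.congr_deriv ?_
    rw [map_sub, smul_sub]
    module
  have hgTi : g T_i = 0 := by
    simp [hgdef, hBdef, intervalIntegral.integral_same]
  have hβI : ‖Complex.I * (β:ℂ)‖ = β := by
    simp [map_mul, Complex.norm_real, abs_of_pos hβ]
  -- bound for β‖B x‖ on [T_i, T_f]
  have hBbd : ∀ x ∈ Set.Icc T_i T_f, β * ‖B x‖ ≤ 2 * C₀ * β ^ ((1:ℝ)/2) := by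
    intro x hx
    have h2 : β * (x - T_i) ≤ 1 := by
      have hx1 : x - T_i ≤ 1 / β := le_trans (by linarith [hx.2]) hT
      calc β * (x - T_i) ≤ β * (1 / β) := by nlinarith
        _ = 1 := by field_simp
    have := hInt x hx
    have hBx : β * ‖B x‖ ≤ β * (C₀ * (β ^ (-(1:ℝ)/2) + β ^ ((1:ℝ)/2) * (x - T_i))) := by
      nlinarith
    refine hBx.trans ?_
    have expand : β * (C₀ * (β ^ (-(1:ℝ)/2) + β ^ ((1:ℝ)/2) * (x - T_i)))
        = C₀ * (β ^ ((1:ℝ)/2)) + C₀ * β ^ ((1:ℝ)/2) * (β * (x - T_i)) := by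
      rw [← h1]; ring
    rw [expand]
    have h3 : C₀ * β ^ ((1:ℝ)/2) * (β * (x - T_i)) ≤ C₀ * β ^ ((1:ℝ)/2) * 1 :=
      mul_le_mul_of_nonneg_left h2 (by positivity)
    linarith
  set K : ℝ := 2 * M * β with hK
  set ε : ℝ := 2 * M * β * (2 * C₀ * β ^ ((1:ℝ)/2)) with hε
  have hKpos : 0 < K := by positivity
  have hgron : ∀ x ∈ Set.Icc T_i T_f, ‖g x‖ ≤ gronwallBound 0 K ε (x - T_i) := by
    apply norm_le_gronwallBound_of_norm_deriv_right_le
    · exact fun x _ => (hg x).continuousAt.continuousWithinAt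
    · exact fun x _ => (hg x).hasDerivWithinAt
    · rw [hgTi]; simp
    · intro x hx
      have hx' : x ∈ Set.Icc T_i T_f := ⟨hx.1, le_of_lt hx.2⟩
      have hd : c₁ x - c₁ T_i = g x - (Complex.I * (β:ℂ)) • (B x) v := by
        simp [hgdef]
      have hn : ‖(-(Complex.I) * (β:ℂ)) • (A₁ x) (c₁ x - c₁ T_i)‖
          = β * ‖(A₁ x) (c₁ x - c₁ T_i)‖ := by
        rw [norm_smul]
        simp [map_mul, Complex.norm_real, abs_of_pos hβ]
      rw [hn, hd]
      have hA : ‖(A₁ x) (g x - (Complex.I * (β:ℂ)) • (B x) v)‖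
          ≤ 2 * M * (‖g x‖ + β * ‖B x‖) := by
        calc ‖(A₁ x) (g x - (Complex.I * (β:ℂ)) • (B x) v)‖
            ≤ ‖A₁ x‖ * ‖g x - (Complex.I * (β:ℂ)) • (B x) v‖ :=
              (A₁ x).le_opNorm _
          _ ≤ (2 * M) * (‖g x‖ + β * ‖B x‖) := by
              apply mul_le_mul (hAnorm x) ?_ (norm_nonneg _) (by positivity)
              refine (norm_sub_le _ _).trans ?_
              have hv1 : ‖(B x) v‖ ≤ ‖B x‖ :=
                ((B x).le_opNorm v).trans (by nlinarith [norm_nonneg (B x)])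
              have : ‖(Complex.I * (β:ℂ)) • (B x) v‖ ≤ β * ‖B x‖ := by
                rw [norm_smul, hβI]
                exact mul_le_mul_of_nonneg_left hv1 hβ.le
              linarith
      have hBb := hBbd x hx'
      calc β * ‖(A₁ x) (g x - (Complex.I * (β:ℂ)) • (B x) v)‖
          ≤ β * (2 * M * (‖g x‖ + β * ‖B x‖)) := by nlinarith
        _ ≤ K * ‖g x‖ + ε := by rw [hK, hε]; nlinarith [norm_nonneg (g x)]
  -- evaluate the Gronwall bound
  have hgval : ∀ x ∈ Set.Icc T_i T_f, ‖g x‖ ≤ 2 * C₀ * β ^ ((1:ℝ)/2) * (Real.exp (2*M) - 1) := by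
    intro x hx
    refine (hgron x hx).trans ?_
    rw [gronwallBound_of_K_ne_0 (ne_of_gt hKpos)]
    simp only [zero_mul, zero_add]
    have hεK : ε / K = 2 * C₀ * β ^ ((1:ℝ)/2) := by
      rw [hε, hK]; exact mul_div_cancel_left₀ _ (by positivity)
    rw [hεK]
    have hexp : Real.exp (K * (x - T_i)) ≤ Real.exp (2 * M) := by
      apply Real.exp_le_exp.mpr
      rw [hK]
      have : β * (x - T_i) ≤ 1 := by
        have hx1 : x - T_i ≤ 1 / β := le_trans (by linarith [hx.2]) hT
        calc β * (x - T_i) ≤ β * (1 / β) := by nlinarith [hx.1]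
          _ = 1 := by field_simp
      nlinarith
    have h0 : (0:ℝ) ≤ 2 * C₀ * β ^ ((1:ℝ)/2) := by positivity
    nlinarith [Real.exp_pos (K * (x - T_i))]
  -- conclude
  have hd : c₁ t - c₁ T_i = g t - (Complex.I * (β:ℂ)) • (B t) v := by simp [hgdef]
  rw [hd]
  have hBt : ‖(Complex.I * (β:ℂ)) • (B t) v‖ ≤ 2 * C₀ * β ^ ((1:ℝ)/2) := by
    rw [norm_smul, hβI]
    have hv1 : ‖(B t) v‖ ≤ ‖B t‖ :=
      ((B t).le_opNorm v).trans (by nlinarith [norm_nonneg (B t)])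
    have h2' := hBbd t ht
    calc β * ‖(B t) v‖ ≤ β * ‖B t‖ := mul_le_mul_of_nonneg_left hv1 hβ.le
      _ ≤ 2 * C₀ * β ^ ((1:ℝ)/2) := h2'
  calc ‖g t - (Complex.I * (β:ℂ)) • (B t) v‖ ≤ ‖g t‖ + ‖(Complex.I * (β:ℂ)) • (B t) v‖ :=
        norm_sub_le _ _
    _ ≤ 2 * C₀ * β ^ ((1:ℝ)/2) * (Real.exp (2*M) - 1) + 2 * C₀ * β ^ ((1:ℝ)/2) := by
        have := hgval t ht
        linarith
    _ = 2 * C₀ * Real.exp (2 * M) * β ^ ((1:ℝ)/2) := by ring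
end
end

section
/- Let c₁ solve i·c₁' = βA₁(t)c₁ with ‖c₁(t)‖ = 1 and ‖A₁(t)‖ ≤ 2M. Define the normal-form transform Ũ(t)f = (I + iβ∫_{T_i}^t A₁(s)ds)f and c̃₁(t) = Ũ(t)c₁(t). Then c̃₁ satisfies i·c̃₁'(t) = iβ²(∫_{T_i}^t A₁(s)ds)A₁(t)c₁(t), and if ‖∫_{T_i}^t A₁(s)ds‖ ≤ C(β^{−1/2} + β^{1/2}(t−T_i)) then sup_{T_i ≤ t ≤ T_f} ‖c̃₁(t) − c̃₁(T_i)‖ ≤ C'β^{3/2}(|T_f−T_i| + β|T_f−T_i|²). -/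
open scoped Real
open MeasureTheory intervalIntegral Filter

noncomputable section

set_option maxHeartbeats 1000000 in
/-- the normal form transform of c1 satisfies the stated derivative identity
and the stated sup bound. -/

theorem stmt10 (M C : ℝ) :
    ∃ C' > 0, ∀ (N : ℕ) (β T_i T_f : ℝ), 0 < β → β < 1 → T_i ≤ T_f →
    ∀ (A₁ : ℝ → Lop N) (c₁ : ℝ → Hs N),
    Continuous A₁ → (∀ t, IsSelfAdjoint (A₁ t)) → (∀ t, ‖A₁ t‖ ≤ 2 * M) →
    (∀ t, HasDerivAt c₁ ((-(Complex.I) * (β : ℂ)) • (A₁ t) (c₁ t)) t) →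
    (∀ t, ‖c₁ t‖ = 1) →
    (∀ t ∈ Set.Icc T_i T_f,
      HasDerivAt (fun τ => c₁ τ + (Complex.I * (β : ℂ)) • (∫ s in T_i..τ, A₁ s) (c₁ τ))
        (((β : ℂ) ^ 2) • (∫ s in T_i..t, A₁ s) ((A₁ t) (c₁ t))) t) ∧
    ((∀ t ∈ Set.Icc T_i T_f,
        ‖∫ s in T_i..t, A₁ s‖ ≤ C * (β ^ (-(1:ℝ)/2) + β ^ ((1:ℝ)/2) * (t - T_i))) →
      ∀ t ∈ Set.Icc T_i T_f,
        ‖(c₁ t + (Complex.I * (β : ℂ)) • (∫ s in T_i..t, A₁ s) (c₁ t)) - c₁ T_i‖ ≤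
          C' * β ^ ((3:ℝ)/2) * ((T_f - T_i) + β * (T_f - T_i) ^ 2)) := by
  refine ⟨2 * |M| * |C| + 1, by positivity, ?_⟩
  intro N β T_i T_f hβ hβ1 hTT A₁ c₁ hAc hAsa hAbd hc₁ hc₁n
  set B : ℝ → Lop N := fun u => ∫ s in T_i..u, A₁ s with hB
  have hBderiv : ∀ t : ℝ, HasDerivAt B (A₁ t) t :=
    fun t => (hAc.integral_hasStrictDerivAt T_i t).hasDerivAt
  have hIβ : ∀ (x y : Hs N),
      (Complex.I * (β:ℂ)) * (-(Complex.I) * (β:ℂ)) = ((β:ℂ))^2 := by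
    intro x y
    have := Complex.I_sq
    ring_nf
    linear_combination -(β:ℂ)^2 * Complex.I_sq
  have hderiv : ∀ t : ℝ,
      HasDerivAt (fun τ => c₁ τ + (Complex.I * (β : ℂ)) • (B τ) (c₁ τ))
        (((β : ℂ) ^ 2) • (B t) ((A₁ t) (c₁ t))) t := by
    intro t
    set Rr : Lop N →L[ℝ] (Hs N →L[ℝ] Hs N) :=
      ContinuousLinearMap.restrictScalarsL ℂ (Hs N) (Hs N) ℝ ℝ with hRr
    have hR : HasDerivAt (fun τ => Rr (B τ)) (Rr (A₁ t)) t :=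
      Rr.hasFDerivAt.comp_hasDerivAt t (hBderiv t)
    have h1 := (hR.clm_apply (hc₁ t)).const_smul (Complex.I * (β:ℂ))
    have h2 := (hc₁ t).add h1
    have hfun : (fun τ => c₁ τ + (Complex.I * (β:ℂ)) • (Rr (B τ)) (c₁ τ))
        = fun τ => c₁ τ + (Complex.I * (β:ℂ)) • (B τ) (c₁ τ) := rfl
    change HasDerivAt (fun τ => c₁ τ + (Complex.I * (β:ℂ)) • (B τ) (c₁ τ)) _ t at h2
    convert h2 using 1
    show _ = (-(Complex.I) * (β:ℂ)) • (A₁ t) (c₁ t) +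
      (Complex.I * (β:ℂ)) • ((A₁ t) (c₁ t) + (B t) ((-(Complex.I) * (β:ℂ)) • (A₁ t) (c₁ t)))
    rw [_root_.map_smul, smul_add, smul_smul, hIβ (c₁ t) (c₁ t)]
    module
  constructor
  · exact fun t _ => hderiv t
  · intro hbd t ht
    have hC : 0 ≤ C := by
      have h0 := hbd T_i ⟨le_refl _, hTT⟩
      simp only [intervalIntegral.integral_same, norm_zero, sub_self, mul_zero, add_zero] at h0
      nlinarith [Real.rpow_pos_of_pos hβ (-(1:ℝ)/2)]
    have hM : 0 ≤ M := by have := hAbd T_i; have := norm_nonneg (A₁ T_i); linarith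
    have hc₁cont : Continuous c₁ := by
      rw [continuous_iff_continuousAt]; exact fun t => (hc₁ t).continuousAt
    have hBcont : Continuous B := by
      rw [continuous_iff_continuousAt]; exact fun t => (hBderiv t).continuousAt
    have hgCont : Continuous fun s => ((β : ℂ) ^ 2) • (B s) ((A₁ s) (c₁ s)) :=
      (hBcont.clm_apply (hAc.clm_apply hc₁cont)).const_smul ((β : ℂ) ^ 2)
    have hftc := intervalIntegral.integral_eq_sub_of_hasDerivAt
      (f := fun τ => c₁ τ + (Complex.I * (β : ℂ)) • (B τ) (c₁ τ))
      (f' := fun s => ((β : ℂ) ^ 2) • (B s) ((A₁ s) (c₁ s)))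
      (a := T_i) (b := t) (fun x _ => hderiv x) (hgCont.intervalIntegrable _ _)
    have hBTi : B T_i = 0 := intervalIntegral.integral_same
    simp only [hBTi, ContinuousLinearMap.zero_apply, smul_zero, add_zero] at hftc
    rw [← hftc]
    set Δ := T_f - T_i with hΔ
    have hΔ0 : 0 ≤ Δ := by linarith
    set K := β ^ 2 * (2 * M * (C * (β ^ (-(1:ℝ)/2) + β ^ ((1:ℝ)/2) * Δ))) with hK
    have hK0 : 0 ≤ K := by
      have := Real.rpow_pos_of_pos hβ (-(1:ℝ)/2)
      have := Real.rpow_pos_of_pos hβ ((1:ℝ)/2)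
      positivity
    have hbound : ∀ x ∈ Set.uIoc T_i t, ‖((β : ℂ) ^ 2) • (B x) ((A₁ x) (c₁ x))‖ ≤ K := by
      intro x hx
      rw [Set.uIoc_of_le ht.1] at hx
      have hx1 : T_i ≤ x := le_of_lt hx.1
      have hx2 : x ≤ T_f := le_trans hx.2 ht.2
      have hBx := hbd x ⟨hx1, hx2⟩
      have h1 : ‖(B x) ((A₁ x) (c₁ x))‖ ≤ ‖B x‖ * (2 * M) := by
        calc ‖(B x) ((A₁ x) (c₁ x))‖ ≤ ‖B x‖ * ‖(A₁ x) (c₁ x)‖ :=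
              (B x).le_opNorm _
          _ ≤ ‖B x‖ * (‖A₁ x‖ * ‖c₁ x‖) := by
              gcongr; exact (A₁ x).le_opNorm _
          _ ≤ ‖B x‖ * (2 * M) := by
              rw [hc₁n x, mul_one]
              exact mul_le_mul_of_nonneg_left (hAbd x) (norm_nonneg _)
      rw [norm_smul]
      have hnb : ‖((β:ℂ))^2‖ = β ^ 2 := by
        rw [norm_pow, Complex.norm_real, Real.norm_of_nonneg hβ.le]
      rw [hnb, hK]
      have hle : ‖B x‖ ≤ C * (β ^ (-(1:ℝ)/2) + β ^ ((1:ℝ)/2) * Δ) := by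
        refine le_trans hBx ?_
        have hxd : x - T_i ≤ Δ := by simp only [hΔ]; linarith
        gcongr
      calc β^2 * ‖(B x) ((A₁ x) (c₁ x))‖ ≤ β^2 * (‖B x‖ * (2*M)) := by gcongr
        _ ≤ β^2 * ((C * (β ^ (-(1:ℝ)/2) + β ^ ((1:ℝ)/2) * Δ)) * (2*M)) := by
            gcongr
        _ = β ^ 2 * (2 * M * (C * (β ^ (-(1:ℝ)/2) + β ^ ((1:ℝ)/2) * Δ))) := by ring
    have hint := intervalIntegral.norm_integral_le_of_norm_le_const hbound
    refine le_trans hint ?_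
    have habs : |t - T_i| ≤ Δ := by rw [abs_of_nonneg (by linarith [ht.1])]; linarith [ht.2]
    calc K * |t - T_i| ≤ K * Δ := by gcongr
      _ ≤ (2 * |M| * |C| + 1) * β ^ ((3:ℝ)/2) * (Δ + β * Δ ^ 2) := by
          rw [hK]
          rw [abs_of_nonneg hM, abs_of_nonneg hC]
          have e1 : β ^ 2 * β ^ (-(1:ℝ)/2) = β ^ ((3:ℝ)/2) := by
            rw [← Real.rpow_natCast β 2, ← Real.rpow_add hβ]
            norm_num
          have e2 : β ^ 2 * β ^ ((1:ℝ)/2) = β * β ^ ((3:ℝ)/2) := by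
            nth_rewrite 3 [← Real.rpow_one β]
            rw [← Real.rpow_natCast β 2, ← Real.rpow_add hβ, ← Real.rpow_add hβ]
            norm_num
          have h1 : β ^ 2 * (2 * M * (C * (β ^ (-(1:ℝ)/2) + β ^ ((1:ℝ)/2) * Δ))) * Δ
              = 2 * M * C * (β ^ ((3:ℝ)/2) * (Δ + β * Δ ^ 2)) := by
            linear_combination (2*M*C*Δ) * e1 + (2*M*C*Δ^2) * e2
          rw [h1]
          have hpos : 0 ≤ β ^ ((3:ℝ)/2) * (Δ + β * Δ ^ 2) := by positivity
          nlinarith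
end
end

section
/- Let c solve i·c' = βA₁c and define b₁ = (β/i)(∫_{T_i}^{T_f} A₁(s)ds)c(T_f) and b₂ = −(β/i)∫_{T_i}^{T_f}(∫_{T_i}^s A₁(s')ds')c'(s)ds. Then c(T_f) − c(T_i) = b₁ + b₂ (integration by parts decomposition), and if ‖∫_{T_i}^{t}A₁(s)ds‖ ≤ C(β^{−1/2}+β^{1/2}(t−T_i)) and ‖A₁(t)‖ ≤ M with ‖c(t)‖ ≤ 1, then ‖b₁‖ ≤ Cβ(β^{−1/2}+β^{1/2}|T_f−T_i|) and ‖b₂‖ ≤ Cβ^{3/2}(|T_f−T_i| + β|T_f−T_i|²). -/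
open scoped Real
open MeasureTheory intervalIntegral Filter

noncomputable section

set_option synthInstance.maxHeartbeats 1000000
set_option maxHeartbeats 1000000

/-- integration-by-parts decomposition c(T_f) − c(T_i) = b₁ + b₂
with b₁ = (β/i)(∫_{T_i}^{T_f}A₁)c(T_f), b₂ = −(β/i)∫_{T_i}^{T_f}(∫_{T_i}^s A₁)c'(s)ds,
and the corresponding bounds. -/
theorem stmt11 (N : ℕ) (M C β T_i T_f : ℝ) (hC : 0 < C) (hM : 0 ≤ M)
    (hβ0 : 0 < β) (hβ1 : β < 1) (hT : T_i ≤ T_f)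
    (A₁ : ℝ → Lop N) (c c' : ℝ → Hs N)
    (hA₁ : ContinuousOn A₁ (Set.Icc T_i T_f))
    (hc : ∀ t ∈ Set.Icc T_i T_f, HasDerivWithinAt c (c' t) (Set.Icc T_i T_f) t)
    (hc' : ContinuousOn c' (Set.Icc T_i T_f))
    (hode : ∀ t ∈ Set.Icc T_i T_f, Complex.I • c' t = (β : ℂ) • (A₁ t) (c t))
    (hint : ∀ t ∈ Set.Icc T_i T_f,
      ‖∫ s in T_i..t, A₁ s‖ ≤ C * (β ^ (-(1:ℝ)/2) + β ^ ((1:ℝ)/2) * (t - T_i)))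
    (hbd : ∀ t ∈ Set.Icc T_i T_f, ‖A₁ t‖ ≤ M)
    (hcbd : ∀ t ∈ Set.Icc T_i T_f, ‖c t‖ ≤ 1) :
    c T_f - c T_i =
        (-(Complex.I) * (β : ℂ)) • (∫ s in T_i..T_f, A₁ s) (c T_f)
        + (Complex.I * (β : ℂ)) • ∫ s in T_i..T_f, (∫ r in T_i..s, A₁ r) (c' s) ∧
    ‖(-(Complex.I) * (β : ℂ)) • (∫ s in T_i..T_f, A₁ s) (c T_f)‖ ≤
        C * β * (β ^ (-(1:ℝ)/2) + β ^ ((1:ℝ)/2) * (T_f - T_i)) ∧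
    ‖(Complex.I * (β : ℂ)) • ∫ s in T_i..T_f, (∫ r in T_i..s, A₁ r) (c' s)‖ ≤
        C * M * β ^ ((3:ℝ)/2) * ((T_f - T_i) + β * (T_f - T_i) ^ 2) := by
  haveI : SecondCountableTopology (Lop N) := inferInstance
  have hIcc : Set.uIcc T_i T_f = Set.Icc T_i T_f := Set.uIcc_of_le hT
  set B : ℝ → Lop N := fun t => ∫ s in T_i..t, A₁ s with hBdef
  have hA₁int : IntervalIntegrable A₁ volume T_i T_f :=
    (hA₁.mono (by rw [hIcc])).intervalIntegrable
  have hcC : ContinuousOn c (Set.Icc T_i T_f) :=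
    fun t ht => (hc t ht).continuousWithinAt
  have hBC : ContinuousOn B (Set.Icc T_i T_f) := by
    rw [← hIcc]
    exact intervalIntegral.continuousOn_primitive_interval' hA₁int Set.left_mem_uIcc
  have hmem : ∀ x ∈ Set.Ioo T_i T_f, Set.Icc T_i T_f ∈ nhdsWithin x (Set.Ioi x) := by
    intro x hx
    exact Icc_mem_nhdsGT_of_mem ⟨le_of_lt hx.1, hx.2⟩
  -- derivative of B
  have hBderiv : ∀ x ∈ Set.Ioo T_i T_f, HasDerivWithinAt B (A₁ x) (Set.Ioi x) x := by
    intro x hx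
    have hx' : x ∈ Set.Icc T_i T_f := Set.mem_Icc.2 ⟨le_of_lt hx.1, le_of_lt hx.2⟩
    have h1 : IntervalIntegrable A₁ volume T_i x := by
      apply hA₁int.mono_set
      rw [hIcc, Set.uIcc_of_le hx'.1]
      exact Set.Icc_subset_Icc le_rfl hx'.2
    have hmeas : StronglyMeasurableAtFilter A₁ (nhdsWithin x (Set.Ioi x)) :=
      ⟨Set.Icc T_i T_f, hmem x hx, hA₁.aestronglyMeasurable measurableSet_Icc⟩
    have hcw : ContinuousWithinAt A₁ (Set.Ioi x) x :=
      (hA₁ x hx').mono_of_mem_nhdsWithin (hmem x hx)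
    exact (intervalIntegral.integral_hasDerivWithinAt_right h1 hmeas hcw).mono
      Set.Ioi_subset_Ici_self
  -- the ODE rewritten
  have hode' : ∀ t ∈ Set.Icc T_i T_f, c' t = (-(Complex.I) * (β : ℂ)) • (A₁ t) (c t) := by
    intro t ht
    have h := hode t ht
    rw [mul_smul, ← h, smul_smul]
    simp [Complex.I_mul_I]
  -- continuity of pieces
  have hAc : ContinuousOn (fun s => (A₁ s) (c s)) (Set.Icc T_i T_f) := hA₁.clm_apply hcC
  have hBc' : ContinuousOn (fun s => (B s) (c' s)) (Set.Icc T_i T_f) := hBC.clm_apply hc'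
  have hAcint : IntervalIntegrable (fun s => (A₁ s) (c s)) volume T_i T_f :=
    (hAc.mono (by rw [hIcc])).intervalIntegrable
  have hBc'int : IntervalIntegrable (fun s => (B s) (c' s)) volume T_i T_f :=
    (hBc'.mono (by rw [hIcc])).intervalIntegrable
  have hc'int : IntervalIntegrable c' volume T_i T_f :=
    (hc'.mono (by rw [hIcc])).intervalIntegrable
  -- FTC for c
  have ftc_c : ∫ s in T_i..T_f, c' s = c T_f - c T_i := by
    apply intervalIntegral.integral_eq_sub_of_hasDeriv_right_of_le hT hcC _ hc'int
    intro x hx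
    exact (hc x ⟨le_of_lt hx.1, le_of_lt hx.2⟩).mono_of_mem_nhdsWithin (hmem x hx)
  -- FTC for the product g = B • c
  have ftc_g : ∫ s in T_i..T_f, ((A₁ s) (c s) + (B s) (c' s)) =
      (B T_f) (c T_f) - (B T_i) (c T_i) := by
    apply intervalIntegral.integral_eq_sub_of_hasDeriv_right_of_le hT
      (hBC.clm_apply hcC) _ (hAcint.add hBc'int)
    intro x hx
    have hcx : HasDerivWithinAt c (c' x) (Set.Ioi x) x :=
      (hc x ⟨le_of_lt hx.1, le_of_lt hx.2⟩).mono_of_mem_nhdsWithin (hmem x hx)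
    have hR : HasDerivWithinAt (fun s => (B s).restrictScalars ℝ)
        ((A₁ x).restrictScalars ℝ) (Set.Ioi x) x :=
      (ContinuousLinearMap.restrictScalarsL ℂ (Hs N) (Hs N) ℝ
        ℝ).hasFDerivAt.comp_hasDerivWithinAt x (hBderiv x hx)
    exact hR.clm_apply hcx
  have hBTi : B T_i = 0 := by simp [hBdef]
  have hsplit : ∫ s in T_i..T_f, ((A₁ s) (c s) + (B s) (c' s)) =
      (∫ s in T_i..T_f, (A₁ s) (c s)) + ∫ s in T_i..T_f, (B s) (c' s) :=
    intervalIntegral.integral_add hAcint hBc'int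
  have key : ∫ s in T_i..T_f, (A₁ s) (c s) =
      (B T_f) (c T_f) - ∫ s in T_i..T_f, (B s) (c' s) := by
    rw [eq_sub_iff_add_eq, ← hsplit, ftc_g, hBTi]
    simp
  -- the decomposition
  have decomp : c T_f - c T_i =
      (-(Complex.I) * (β : ℂ)) • (B T_f) (c T_f)
      + (Complex.I * (β : ℂ)) • ∫ s in T_i..T_f, (B s) (c' s) := by
    rw [← ftc_c]
    have h2 : ∫ s in T_i..T_f, c' s =
        ∫ s in T_i..T_f, (-(Complex.I) * (β : ℂ)) • (A₁ s) (c s) := by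
      apply intervalIntegral.integral_congr
      intro s hs
      exact hode' s (by rwa [hIcc] at hs)
    rw [h2, intervalIntegral.integral_smul, key, smul_sub, sub_eq_add_neg, ← neg_smul,
      ← neg_mul, neg_neg]
  -- norm facts
  have hnormcoef : ‖(-(Complex.I) * (β : ℂ))‖ = β := by
    simp [norm_mul, Complex.norm_real, abs_of_pos hβ0]
  have hnormcoef' : ‖(Complex.I * (β : ℂ))‖ = β := by
    simp [norm_mul, Complex.norm_real, abs_of_pos hβ0]
  have hTf : T_f ∈ Set.Icc T_i T_f := Set.mem_Icc.2 ⟨hT, le_rfl⟩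
  have hX : 0 ≤ C * (β ^ (-(1:ℝ)/2) + β ^ ((1:ℝ)/2) * (T_f - T_i)) := by
    have p1 := (Real.rpow_pos_of_pos hβ0 (-(1:ℝ)/2)).le
    have p2 := (Real.rpow_pos_of_pos hβ0 ((1:ℝ)/2)).le
    have hΔ : 0 ≤ T_f - T_i := by linarith
    exact mul_nonneg hC.le (add_nonneg p1 (mul_nonneg p2 hΔ))
  -- bound for b₁
  have hb1 : ‖(-(Complex.I) * (β : ℂ)) • (B T_f) (c T_f)‖ ≤
      C * β * (β ^ (-(1:ℝ)/2) + β ^ ((1:ℝ)/2) * (T_f - T_i)) := by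
    rw [norm_smul, hnormcoef]
    have h1 : ‖(B T_f) (c T_f)‖ ≤ ‖B T_f‖ * ‖c T_f‖ := (B T_f).le_opNorm _
    have h2 : ‖B T_f‖ * ‖c T_f‖ ≤ (C * (β ^ (-(1:ℝ)/2) + β ^ ((1:ℝ)/2) * (T_f - T_i))) * 1 := by
      exact mul_le_mul (hint T_f hTf) (hcbd T_f hTf) (norm_nonneg _) hX
    calc β * ‖(B T_f) (c T_f)‖ ≤ β * (C * (β ^ (-(1:ℝ)/2) + β ^ ((1:ℝ)/2) * (T_f - T_i)) * 1) :=
          mul_le_mul_of_nonneg_left (le_trans h1 h2) (le_of_lt hβ0)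
      _ = C * β * (β ^ (-(1:ℝ)/2) + β ^ ((1:ℝ)/2) * (T_f - T_i)) := by ring
  -- bound for ‖c'‖
  have hc'bd : ∀ t ∈ Set.Icc T_i T_f, ‖c' t‖ ≤ β * M := by
    intro t ht
    have h1 : ‖c' t‖ = ‖Complex.I • c' t‖ := by
      rw [norm_smul]; simp
    rw [h1, hode t ht, norm_smul]
    calc ‖((β : ℝ) : ℂ)‖ * ‖(A₁ t) (c t)‖ = β * ‖(A₁ t) (c t)‖ := by
          simp [Complex.norm_real, abs_of_pos hβ0]
      _ ≤ β * (‖A₁ t‖ * ‖c t‖) := mul_le_mul_of_nonneg_left ((A₁ t).le_opNorm _) hβ0.le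
      _ ≤ β * (M * 1) := by
          apply mul_le_mul_of_nonneg_left _ hβ0.le
          exact mul_le_mul (hbd t ht) (hcbd t ht) (norm_nonneg _) hM
      _ = β * M := by ring
  -- rpow arithmetic
  have k1 : β ^ (-(1:ℝ)/2) * β = β ^ ((1:ℝ)/2) := by
    rw [← Real.rpow_add_one hβ0.ne']; norm_num
  have k2 : β ^ ((1:ℝ)/2) * β = β ^ ((3:ℝ)/2) := by
    rw [← Real.rpow_add_one hβ0.ne']; norm_num
  have e1 : β * β * β ^ (-(1:ℝ)/2) = β ^ ((3:ℝ)/2) := by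
    calc β * β * β ^ (-(1:ℝ)/2) = β ^ (-(1:ℝ)/2) * β * β := by ring
      _ = β ^ ((1:ℝ)/2) * β := by rw [k1]
      _ = β ^ ((3:ℝ)/2) := k2
  have e2 : β * β * β ^ ((1:ℝ)/2) = β ^ ((3:ℝ)/2) * β := by
    calc β * β * β ^ ((1:ℝ)/2) = β ^ ((1:ℝ)/2) * β * β := by ring
      _ = β ^ ((3:ℝ)/2) * β := by rw [k2]
  -- bound for b₂
  have hb2 : ‖(Complex.I * (β : ℂ)) • ∫ s in T_i..T_f, (B s) (c' s)‖ ≤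
      C * M * β ^ ((3:ℝ)/2) * ((T_f - T_i) + β * (T_f - T_i) ^ 2) := by
    rw [norm_smul, hnormcoef']
    have hK : ∀ x ∈ Set.uIoc T_i T_f, ‖(B x) (c' x)‖ ≤
        (C * (β ^ (-(1:ℝ)/2) + β ^ ((1:ℝ)/2) * (T_f - T_i))) * (β * M) := by
      intro x hx
      rw [Set.uIoc_of_le hT] at hx
      have hx' : x ∈ Set.Icc T_i T_f := ⟨le_of_lt hx.1, hx.2⟩
      have h2 : ‖B x‖ ≤ C * (β ^ (-(1:ℝ)/2) + β ^ ((1:ℝ)/2) * (T_f - T_i)) := by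
        refine le_trans (hint x hx') ?_
        apply mul_le_mul_of_nonneg_left _ hC.le
        have h3 : β ^ ((1:ℝ)/2) * (x - T_i) ≤ β ^ ((1:ℝ)/2) * (T_f - T_i) :=
          mul_le_mul_of_nonneg_left (by linarith [hx'.2])
            (Real.rpow_pos_of_pos hβ0 _).le
        linarith
      calc ‖(B x) (c' x)‖ ≤ ‖B x‖ * ‖c' x‖ := (B x).le_opNorm _
        _ ≤ (C * (β ^ (-(1:ℝ)/2) + β ^ ((1:ℝ)/2) * (T_f - T_i))) * (β * M) := by
            exact mul_le_mul h2 (hc'bd x hx') (norm_nonneg _) hX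
    have hle := intervalIntegral.norm_integral_le_of_norm_le_const hK
    rw [abs_of_nonneg (by linarith : (0:ℝ) ≤ T_f - T_i)] at hle
    have hfinal : β * ((C * (β ^ (-(1:ℝ)/2) + β ^ ((1:ℝ)/2) * (T_f - T_i))) * (β * M) * (T_f - T_i))
        ≤ C * M * β ^ ((3:ℝ)/2) * ((T_f - T_i) + β * (T_f - T_i) ^ 2) := by
      apply le_of_eq
      linear_combination (C * M * (T_f - T_i)) * e1 + (C * M * (T_f - T_i) ^ 2) * e2
    calc β * ‖∫ s in T_i..T_f, (B s) (c' s)‖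
        ≤ β * ((C * (β ^ (-(1:ℝ)/2) + β ^ ((1:ℝ)/2) * (T_f - T_i))) * (β * M) * (T_f - T_i)) :=
          mul_le_mul_of_nonneg_left hle hβ0.le
      _ ≤ _ := hfinal
  exact ⟨decomp, hb1, hb2⟩
end
end

section
/- Let A^>(t) = Σ_{j≥j₀} (M_j e^{iω_j t} + M_j† e^{−iω_j t}) with ‖M_j‖T₀ ≤ j^{−1−δ} for some δ > 0 and all j ≥ j₀, where T₀ = β^{−1/2}. Let Ā₀^{>g} be the piecewise-constant interval average of A^> with window T₀. Then there is a constant C (depending only on δ, j₀) with ‖∫₀^t (A^>(s) − Ā₀^{>g}(s)) ds‖ ≤ C for all t ≥ 0. -/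
set_option maxHeartbeats 1000000
set_option synthInstance.maxHeartbeats 200000

open scoped Real
open MeasureTheory intervalIntegral Filter

noncomputable section

/-- The high-frequency part A^>(t) = Σ_{j ≥ j₀} (M_j e^{iω_j t} + M_j† e^{−iω_j t}). -/
def Aser {N : ℕ} (Mj : ℕ → Lop N) (ω : ℕ → ℝ) (j₀ : ℕ) (t : ℝ) : Lop N :=
  ∑' j : ℕ, if j₀ ≤ j then
    (Complex.exp (Complex.I * (ω j : ℂ) * (t : ℂ)) • Mj j +
      Complex.exp (-(Complex.I * (ω j : ℂ) * (t : ℂ))) • star (Mj j))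
  else 0

/-- with ‖M_j‖T₀ ≤ j^{−1−δ} for j ≥ j₀ and T₀ = β^{−1/2},
‖∫₀^t (A^>(s) − Ā₀^{>g}(s)) ds‖ ≤ C for all t ≥ 0, C depending only on δ, j₀. -/
theorem stmt14 (δ : ℝ) (hδ : 0 < δ) (j₀ : ℕ) :
    ∃ C > 0, ∀ (N : ℕ) (β : ℝ), 0 < β → β < 1 →
    ∀ (Mj : ℕ → Lop N) (ω : ℕ → ℝ),
    (∀ j : ℕ, j₀ ≤ j → ‖Mj j‖ * T0 β ≤ (j : ℝ) ^ (-(1 + δ))) →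
    ∀ t ≥ (0:ℝ),
      ‖∫ s in (0:ℝ)..t,
          (Aser Mj ω j₀ s - pavg (Aser Mj ω j₀) (T0 β) s)‖ ≤ C := by
  have hsum : Summable (fun j : ℕ => (j : ℝ) ^ (-(1 + δ))) :=
    Real.summable_nat_rpow.mpr (by linarith)
  set S : ℝ := ∑' j : ℕ, (j : ℝ) ^ (-(1 + δ)) with hSdef
  have hS0 : 0 ≤ S := tsum_nonneg fun j => Real.rpow_nonneg (Nat.cast_nonneg j) _
  refine ⟨4 * S + 1, by linarith, ?_⟩
  intro N β hβ hβ1 Mj ω hM t ht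
  have hT : 0 < T0 β := Real.rpow_pos_of_pos hβ _
  set T₀ : ℝ := T0 β with hT₀def
  set A : ℝ → Lop N := Aser Mj ω j₀ with hAdef
  set B : ℝ := 2 * T₀⁻¹ * S with hBdef
  -- pointwise bound on each term of the series
  have hterm : ∀ (s : ℝ) (j : ℕ),
      ‖(if j₀ ≤ j then
          (Complex.exp (Complex.I * (ω j : ℂ) * (s : ℂ)) • Mj j +
            Complex.exp (-(Complex.I * (ω j : ℂ) * (s : ℂ))) • star (Mj j))
        else 0 : Lop N)‖ ≤ 2 * T₀⁻¹ * (j : ℝ) ^ (-(1 + δ)) := by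
    intro s j
    split_ifs with h
    · have hMle : ‖Mj j‖ ≤ T₀⁻¹ * (j : ℝ) ^ (-(1 + δ)) := by
        rw [inv_mul_eq_div, le_div_iff₀ hT]
        exact hM j h
      have he1 : ‖Complex.exp (Complex.I * (ω j : ℂ) * (s : ℂ))‖ = 1 := by
        rw [Complex.norm_exp]; simp
      have he2 : ‖Complex.exp (-(Complex.I * (ω j : ℂ) * (s : ℂ)))‖ = 1 := by
        rw [Complex.norm_exp]; simp
      have hstar : ‖star (Mj j)‖ = ‖Mj j‖ := by
        rw [ContinuousLinearMap.star_eq_adjoint]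
        exact ContinuousLinearMap.adjoint.norm_map (Mj j)
      calc ‖_ + _‖ ≤ ‖Complex.exp (Complex.I * (ω j : ℂ) * (s : ℂ)) • Mj j‖ +
            ‖Complex.exp (-(Complex.I * (ω j : ℂ) * (s : ℂ))) • star (Mj j)‖ := norm_add_le _ _
        _ ≤ ‖Complex.exp (Complex.I * (ω j : ℂ) * (s : ℂ))‖ * ‖Mj j‖ +
            ‖Complex.exp (-(Complex.I * (ω j : ℂ) * (s : ℂ)))‖ * ‖star (Mj j)‖ :=
              add_le_add (ContinuousLinearMap.opNorm_smul_le _ _)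
                (ContinuousLinearMap.opNorm_smul_le _ _)
        _ = ‖Mj j‖ + ‖Mj j‖ := by rw [he1, he2, hstar]; ring
        _ ≤ 2 * (T₀⁻¹ * (j : ℝ) ^ (-(1 + δ))) := by linarith
        _ = 2 * T₀⁻¹ * (j : ℝ) ^ (-(1 + δ)) := by ring
    · simp only [norm_zero]
      have : 0 ≤ (j : ℝ) ^ (-(1 + δ)) := Real.rpow_nonneg (Nat.cast_nonneg j) _
      have hTi : 0 ≤ T₀⁻¹ := le_of_lt (by positivity)
      positivity
  have husum : Summable (fun j : ℕ => 2 * T₀⁻¹ * (j : ℝ) ^ (-(1 + δ))) := hsum.mul_left _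
  -- uniform bound on A
  have hA : ∀ s : ℝ, ‖A s‖ ≤ B := by
    intro s
    have h1 : ‖A s‖ ≤ ∑' j : ℕ, 2 * T₀⁻¹ * (j : ℝ) ^ (-(1 + δ)) :=
      tsum_of_norm_bounded husum.hasSum (hterm s)
    calc ‖A s‖ ≤ ∑' j : ℕ, 2 * T₀⁻¹ * (j : ℝ) ^ (-(1 + δ)) := h1
      _ = 2 * T₀⁻¹ * S := tsum_mul_left
  have hB0 : 0 ≤ B := le_trans (norm_nonneg _) (hA 0)
  -- continuity of A
  have hcont : Continuous A := by
    rw [hAdef]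
    have : (Aser Mj ω j₀) = fun t => ∑' j : ℕ, (fun (j : ℕ) (t : ℝ) => if j₀ ≤ j then
        (Complex.exp (Complex.I * (ω j : ℂ) * (t : ℂ)) • Mj j +
          Complex.exp (-(Complex.I * (ω j : ℂ) * (t : ℂ))) • star (Mj j))
      else 0) j t := rfl
    rw [this]
    refine continuous_tsum (fun j => ?_) husum (fun j s => hterm s j)
    split_ifs with h
    · fun_prop
    · exact continuous_const
  have hAint : ∀ a b : ℝ, IntervalIntegrable A volume a b :=
    fun a b => hcont.intervalIntegrable a b
  -- bound on each average
  have havg : ∀ k : ℕ, ‖avg A T₀ k‖ ≤ B := by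
    intro k
    have h1 : ‖∫ s in ((k : ℝ) * T₀)..(((k : ℝ) + 1) * T₀), A s‖
        ≤ B * |((k : ℝ) + 1) * T₀ - (k : ℝ) * T₀| :=
      intervalIntegral.norm_integral_le_of_norm_le_const fun x _ => hA x
    have h2 : ((k : ℝ) + 1) * T₀ - (k : ℝ) * T₀ = T₀ := by ring
    rw [h2, abs_of_pos hT] at h1
    have hle : ‖avg A T₀ k‖ ≤ ‖T₀⁻¹‖ * ‖∫ s in ((k : ℝ) * T₀)..(((k : ℝ) + 1) * T₀), A s‖ := by
      rw [avg]; exact ContinuousLinearMap.opNorm_smul_le _ _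
    rw [Real.norm_eq_abs, abs_of_pos (inv_pos.mpr hT)] at hle
    refine le_trans hle ?_
    calc T₀⁻¹ * ‖∫ s in ((k : ℝ) * T₀)..(((k : ℝ) + 1) * T₀), A s‖
        ≤ T₀⁻¹ * (B * T₀) := by
          exact mul_le_mul_of_nonneg_left h1 (le_of_lt (inv_pos.mpr hT))
      _ = B := by field_simp
  -- floor identification
  have hfloor : ∀ (k : ℕ) (s : ℝ), (k : ℝ) * T₀ ≤ s → s < ((k : ℝ) + 1) * T₀ →
      ⌊s / T₀⌋₊ = k := by
    intro k s h1 h2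
    have hs0 : 0 ≤ s / T₀ := div_nonneg (le_trans (by positivity) h1) hT.le
    rw [Nat.floor_eq_iff hs0]
    constructor
    · rw [le_div_iff₀ hT]; exact h1
    · rw [div_lt_iff₀ hT]; linarith
  -- pavg coincides a.e. with avg k on [k T₀, (k+1) T₀]
  have hcongr : ∀ (k : ℕ) (a b : ℝ), (k : ℝ) * T₀ ≤ a → a ≤ b → b ≤ ((k : ℝ) + 1) * T₀ →
      ∀ᵐ s ∂(volume : Measure ℝ), s ∈ Set.uIoc a b → pavg A T₀ s = avg A T₀ k := by
    intro k a b hka hab hbk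
    have hne : ∀ᵐ s : ℝ ∂(volume : Measure ℝ), s ∉ ({((k : ℝ) + 1) * T₀} : Set ℝ) :=
      (Set.countable_singleton _).ae_notMem _
    filter_upwards [hne] with s hs hmem
    rw [Set.uIoc_of_le hab] at hmem
    have h1 : (k : ℝ) * T₀ ≤ s := le_trans hka hmem.1.le
    have h2 : s < ((k : ℝ) + 1) * T₀ :=
      lt_of_le_of_ne (le_trans hmem.2 hbk) (by simpa using hs)
    rw [pavg, hfloor k s h1 h2]
  -- integral over a sub-window
  have hsubint : ∀ (k : ℕ) (a b : ℝ), (k : ℝ) * T₀ ≤ a → a ≤ b → b ≤ ((k : ℝ) + 1) * T₀ →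
      IntervalIntegrable (fun s => A s - pavg A T₀ s) volume a b := by
    intro k a b hka hab hbk
    have hc := hcongr k a b hka hab hbk
    have : IntervalIntegrable (fun s => A s - avg A T₀ k) volume a b :=
      (hAint a b).sub (intervalIntegrable_const)
    refine this.congr_ae ?_
    have := (ae_restrict_mem measurableSet_uIoc (μ := (volume : Measure ℝ)) (s := Set.uIoc a b))
    filter_upwards [ae_restrict_of_ae hc, this] with s hcs hmem
    rw [hcs hmem]
  have hsubval : ∀ (k : ℕ) (a b : ℝ), (k : ℝ) * T₀ ≤ a → a ≤ b → b ≤ ((k : ℝ) + 1) * T₀ →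
      (∫ s in a..b, (A s - pavg A T₀ s)) = ∫ s in a..b, (A s - avg A T₀ k) := by
    intro k a b hka hab hbk
    refine intervalIntegral.integral_congr_ae ?_
    filter_upwards [hcongr k a b hka hab hbk] with s hcs hmem
    rw [hcs hmem]
  -- the integral over a full window vanishes
  have hwin : ∀ k : ℕ,
      (∫ s in ((k : ℝ) * T₀)..(((k : ℝ) + 1) * T₀), (A s - pavg A T₀ s)) = 0 := by
    intro k
    have hab : (k : ℝ) * T₀ ≤ ((k : ℝ) + 1) * T₀ := by nlinarith
    rw [hsubval k _ _ le_rfl hab le_rfl]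
    rw [intervalIntegral.integral_sub (hAint _ _) intervalIntegrable_const,
      intervalIntegral.integral_const]
    have h2 : ((k : ℝ) + 1) * T₀ - (k : ℝ) * T₀ = T₀ := by ring
    rw [h2]
    have : T₀ • avg A T₀ k = ∫ s in ((k : ℝ) * T₀)..(((k : ℝ) + 1) * T₀), A s := by
      rw [avg, smul_smul, mul_inv_cancel₀ hT.ne', one_smul]
    rw [← this, sub_self]
  -- integral up to n T₀ vanishes
  have hzero : ∀ n : ℕ,
      IntervalIntegrable (fun s => A s - pavg A T₀ s) volume 0 ((n : ℝ) * T₀) ∧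
      (∫ s in (0:ℝ)..((n : ℝ) * T₀), (A s - pavg A T₀ s)) = 0 := by
    intro n
    induction n with
    | zero => simp
    | succ n ih =>
      have hab : (n : ℝ) * T₀ ≤ ((n : ℝ) + 1) * T₀ := by nlinarith
      have hwint : IntervalIntegrable (fun s => A s - pavg A T₀ s) volume
          ((n : ℝ) * T₀) (((n : ℝ) + 1) * T₀) := hsubint n _ _ le_rfl hab le_rfl
      have hcast : ((n + 1 : ℕ) : ℝ) = (n : ℝ) + 1 := by push_cast; ring
      constructor
      · rw [hcast]; exact ih.1.trans hwint
      · rw [hcast, ← intervalIntegral.integral_add_adjacent_intervals ih.1 hwint,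
          ih.2, hwin n, add_zero]
  -- final assembly
  set n : ℕ := ⌊t / T₀⌋₊ with hn
  have hnt : (n : ℝ) * T₀ ≤ t := by
    rw [← le_div_iff₀ hT]
    exact Nat.floor_le (div_nonneg ht hT.le)
  have htn : t < ((n : ℝ) + 1) * T₀ := by
    rw [← div_lt_iff₀ hT]
    exact_mod_cast Nat.lt_floor_add_one (t / T₀)
  have htail : IntervalIntegrable (fun s => A s - pavg A T₀ s) volume ((n : ℝ) * T₀) t :=
    hsubint n _ _ le_rfl hnt htn.le
  have hsplit : (∫ s in (0:ℝ)..t, (A s - pavg A T₀ s))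
      = ∫ s in ((n : ℝ) * T₀)..t, (A s - pavg A T₀ s) := by
    rw [← intervalIntegral.integral_add_adjacent_intervals (hzero n).1 htail, (hzero n).2,
      zero_add]
  rw [hsplit, hsubval n _ _ le_rfl hnt htn.le]
  have hbound : ‖∫ s in ((n : ℝ) * T₀)..t, (A s - avg A T₀ n)‖ ≤ (B + B) * |t - (n : ℝ) * T₀| :=
    intervalIntegral.norm_integral_le_of_norm_le_const fun x _ =>
      le_trans (norm_sub_le _ _) (add_le_add (hA x) (havg n))
  have habs : |t - (n : ℝ) * T₀| ≤ T₀ := by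
    rw [abs_of_nonneg (by linarith)]
    nlinarith
  calc ‖∫ s in ((n : ℝ) * T₀)..t, (A s - avg A T₀ n)‖
      ≤ (B + B) * |t - (n : ℝ) * T₀| := hbound
    _ ≤ (B + B) * T₀ := by nlinarith [abs_nonneg (t - (n : ℝ) * T₀)]
    _ = 4 * S := by rw [hBdef]; field_simp; ring
    _ ≤ 4 * S + 1 := by linarith
end
end
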